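/- arXiv:1111.3405 — 2 statements merged into one kernel-verified Lean document; each statement's English description precedes it below -/
import Mathlib

section
/- Let l, n be positive integers with 1 \le l \le n and let \Lambda = (0, 1, ..., l-1, l+1, ..., n+1) (omitting l). The Gelfond-Bernstein basis of span(1, t, ..., t^{l-1}, t^{l+1}, ..., t^{n+1}) on [0,1] is given by: H_k(t) = ((l-k)/l) \binom{n+1}{k} t^k (1-t)^{n-k} (1 + ((n-l+1)/(l-k)) t) for 0 \le k \le l-1, and H_k(t) = \binom{n+1}{k+1} t^{k+1} (1-t)^{n-k} for l \le k \le n. -/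
/-- The divided difference `[x 0, ..., x n] f` at pairwise distinct points,
given by the explicit formula `∑ i, f (x i) / ∏_{j ≠ i} (x i - x j)`. -/
noncomputable def divSum (n : ℕ) (x : Fin (n+1) → ℝ) (f : ℝ → ℝ) : ℝ :=
  ∑ i : Fin (n+1), f (x i) / ∏ j ∈ Finset.univ.erase i, (x i - x j)


/-- The Gelfond-Bernstein basis function `H^n_{k,Λ}` associated with the sequence
`Λ = (r 0, ..., r n)`: `H^n_k (t) = (-1)^(n-k) r_{k+1} ⋯ r_n [r_k, ..., r_n] f_t`
for `k ≤ n-1` and `H^n_n (t) = t ^ (r n)`, where `f_t x = t ^ x` (real power). -/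
noncomputable def GB (n : ℕ) (r : Fin (n+1) → ℝ) (k : Fin (n+1)) (t : ℝ) : ℝ :=
  if k.val = n then t ^ (r k)
  else (-1 : ℝ) ^ (n - k.val) * (∏ j ∈ Finset.Ioi k, r j) *
    divSum (n - k.val)
      (fun i => r ⟨k.val + i.val, by have h1 := i.isLt; have h2 := k.isLt; omega⟩)
      (fun x => t ^ x)

lemma prodA (m i : ℕ) (hi : i ≤ m) :
    ∏ j ∈ (Finset.range (m+1)).erase i, ((i:ℝ) - (j:ℝ))
      = (-1:ℝ)^(m-i) * (Nat.factorial i) * (Nat.factorial (m-i)) := by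
  have hsplit : (Finset.range (m+1)).erase i = Finset.range i ∪ Finset.Ico (i+1) (m+1) := by
    ext j; simp [Finset.mem_erase, Finset.mem_range, Finset.mem_Ico]; omega
  have hdisj : Disjoint (Finset.range i) (Finset.Ico (i+1) (m+1)) := by
    simp [Finset.disjoint_left, Finset.mem_range, Finset.mem_Ico]; omega
  rw [hsplit, Finset.prod_union hdisj]
  have h1 : ∏ j ∈ Finset.range i, ((i:ℝ) - (j:ℝ)) = (Nat.factorial i : ℝ) := by
    have : ∀ j ∈ Finset.range i, ((i:ℝ) - (j:ℝ)) = ((i - j : ℕ) : ℝ) := by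
      intro j hj; rw [Finset.mem_range] at hj
      rw [Nat.cast_sub hj.le]
    rw [Finset.prod_congr rfl this, ← Nat.cast_prod]
    norm_cast
    calc ∏ j ∈ Finset.range i, (i - j) = ∏ j ∈ Finset.range i, (j + 1) := by
          rw [← Finset.prod_range_reflect (fun j => j + 1) i]
          exact Finset.prod_congr rfl (fun j hj => by rw [Finset.mem_range] at hj; omega)
      _ = Nat.factorial i := Finset.prod_range_add_one_eq_factorial i
  have h2 : ∏ j ∈ Finset.Ico (i+1) (m+1), ((i:ℝ) - (j:ℝ))
      = (-1:ℝ)^(m-i) * (Nat.factorial (m-i) : ℝ) := by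
    have : ∀ j ∈ Finset.Ico (i+1) (m+1), ((i:ℝ) - (j:ℝ)) = (-1) * ((j - i : ℕ) : ℝ) := by
      intro j hj; rw [Finset.mem_Ico] at hj
      have hij : i ≤ j := by omega
      rw [Nat.cast_sub hij]; ring
    rw [Finset.prod_congr rfl this, Finset.prod_mul_distrib, Finset.prod_const]
    have hcard : (Finset.Ico (i+1) (m+1)).card = m - i := by
      rw [Nat.card_Ico]; omega
    rw [hcard, ← Nat.cast_prod]
    congr 1
    norm_cast
    rw [Finset.prod_Ico_eq_prod_range]
    calc ∏ j ∈ Finset.range (m+1-(i+1)), (i + 1 + j - i) = ∏ j ∈ Finset.range (m-i), (j+1) := by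
          apply Finset.prod_congr (by congr 1; omega) (fun j hj => by omega)
      _ = Nat.factorial (m-i) := Finset.prod_range_add_one_eq_factorial _
  rw [h1, h2]; ring


open Finset

/-- index map skipping `c` -/
def eF (c j : ℕ) : ℕ := if j < c then j else j + 1

lemma eF_inj (c : ℕ) : Function.Injective (eF c) := by
  intro a b h; unfold eF at h; split_ifs at h <;> omega

lemma eF_ne (c j : ℕ) : eF c j ≠ c := by unfold eF; split_ifs <;> omega

lemma eF_le (c j N : ℕ) (h : j < N) : eF c j ≤ N := by unfold eF; split_ifs <;> omega

lemma image_eF (N c : ℕ) (hc : c ≤ N) :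
    (Finset.range N).image (eF c) = (Finset.range (N+1)).erase c := by
  ext q
  simp only [Finset.mem_image, Finset.mem_erase, Finset.mem_range]
  constructor
  · rintro ⟨j, hj, rfl⟩
    refine ⟨eF_ne c j, ?_⟩
    have := eF_le c j N hj; omega
  · rintro ⟨hq, hqN⟩
    rcases lt_or_gt_of_ne hq with h | h
    · exact ⟨q, by omega, by unfold eF; rw [if_pos h]⟩
    · exact ⟨q - 1, by omega, by unfold eF; rw [if_neg (by omega)]; omega⟩

lemma prodG (N c i : ℕ) (hc : c ≤ N) (hi : i < N) :
    ((eF c i : ℝ) - c) * ∏ j ∈ (Finset.range N).erase i, ((eF c i : ℝ) - (eF c j : ℝ))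
      = (-1:ℝ)^(N - eF c i) * (Nat.factorial (eF c i)) * (Nat.factorial (N - eF c i)) := by
  have h1 : ∏ j ∈ (Finset.range N).erase i, ((eF c i : ℝ) - (eF c j : ℝ))
      = ∏ q ∈ ((Finset.range (N+1)).erase c).erase (eF c i), ((eF c i : ℝ) - (q:ℝ)) := by
    rw [← image_eF N c hc, ← Finset.image_erase (eF_inj c)]
    rw [Finset.prod_image (fun a _ b _ h => eF_inj c h)]
  rw [h1, Finset.erase_right_comm]
  have hmem : c ∈ (Finset.range (N+1)).erase (eF c i) := by
    rw [Finset.mem_erase, Finset.mem_range]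
    exact ⟨fun h => eF_ne c i h.symm, by omega⟩
  rw [Finset.mul_prod_erase _ (fun q : ℕ => ((eF c i : ℝ) - (q:ℝ))) hmem]
  exact prodA N (eF c i) (eF_le c i N hi)

lemma finErase {m : ℕ} (i : Fin (m+1)) (g : ℕ → ℝ) :
    ∏ j ∈ Finset.univ.erase i, g j.val = ∏ j ∈ (Finset.range (m+1)).erase i.val, g j := by
  have h1 : ∏ j ∈ Finset.univ.erase i, g j.val
      = ∏ j ∈ (Finset.univ : Finset (Fin (m+1))).erase i,
          (fun q => if q = i.val then 1 else g q) j.val :=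
    Finset.prod_congr rfl (fun j hj => by
      rw [Finset.mem_erase] at hj
      simp only [if_neg (fun h => hj.1 (Fin.ext h))])
  rw [h1, Finset.prod_erase Finset.univ
      (f := fun j : Fin (m+1) => if (j:ℕ) = (i:ℕ) then (1:ℝ) else g j.val) (a := i) (if_pos rfl),
    Fin.prod_univ_eq_prod_range (fun q => if q = i.val then 1 else g q),
    ← Finset.prod_erase (Finset.range (m+1)) (f := fun q => if q = i.val then 1 else g q)
      (a := (i:ℕ)) (if_pos rfl)]
  exact (Finset.prod_congr rfl (fun j hj => by
    rw [Finset.mem_erase] at hj; simp only [if_neg hj.1])).symm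

lemma finIoi {n : ℕ} (k : Fin (n+1)) (g : ℕ → ℝ) :
    ∏ j ∈ Finset.Ioi k, g j.val = ∏ j ∈ Finset.Ico (k.val+1) (n+1), g j := by
  have h0 : Finset.Ioi k = Finset.univ.filter (fun j => k < j) := by
    ext j; simp
  rw [h0, Finset.prod_filter]
  have h1 : (fun j : Fin (n+1) => if k < j then g j.val else 1)
      = fun j : Fin (n+1) => (fun q => if k.val < q then g q else 1) j.val := by
    funext j
    by_cases h : (k:ℕ) < (j:ℕ)
    · rw [if_pos (Fin.lt_def.mpr h)]; exact (if_pos h).symm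
    · rw [if_neg (fun hh => h (Fin.lt_def.mp hh))]; exact (if_neg h).symm
  rw [h1, Fin.prod_univ_eq_prod_range (fun q => if k.val < q then g q else 1),
    ← Finset.prod_filter]
  apply Finset.prod_congr _ (fun _ _ => rfl)
  ext j
  simp only [Finset.mem_filter, Finset.mem_Ico, Finset.mem_range]
  omega

lemma factIco (a b : ℕ) (h : a ≤ b) :
    Nat.factorial a * ∏ j ∈ Finset.Ico a b, (j+1) = Nat.factorial b := by
  induction b with
  | zero => interval_cases a; simp
  | succ b ih =>
    rcases Nat.lt_or_ge a (b+1) with h' | h'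
    · have hab : a ≤ b := by omega
      rw [Finset.prod_Ico_succ_top hab, ← mul_assoc, ih hab, Nat.factorial_succ, mul_comm]
    · have : a = b + 1 := by omega
      subst this; simp

lemma sum1 (N : ℕ) (t : ℝ) :
    ∑ q ∈ Finset.range (N+1), t^q * (-1:ℝ)^(N-q) * (N.choose q : ℝ) = (t-1)^N := by
  rw [show t - 1 = t + (-1) by ring, add_pow]

lemma sum2 (N : ℕ) (hN : 1 ≤ N) (t : ℝ) :
    ∑ q ∈ Finset.range (N+1), (q:ℝ) * t^q * (-1:ℝ)^(N-q) * (N.choose q : ℝ)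
      = N * t * (t-1)^(N-1) := by
  rw [Finset.sum_range_succ' ]
  simp only [Nat.cast_zero, zero_mul, add_zero]
  have key : ∀ j, ((j+1:ℕ):ℝ) * (N.choose (j+1) : ℝ) = (N:ℝ) * ((N-1).choose j : ℝ) := by
    intro j
    have h0 := Nat.add_one_mul_choose_eq (N-1) j
    simp only [Nat.succ_eq_add_one, Nat.sub_add_cancel hN] at h0
    exact_mod_cast congrArg (Nat.cast (R := ℝ)) ((mul_comm ((j:ℕ)+1) (N.choose (j+1))).trans h0.symm)
  calc ∑ j ∈ Finset.range N, ((j+1:ℕ):ℝ) * t^(j+1) * (-1:ℝ)^(N-(j+1)) * (N.choose (j+1) : ℝ)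
      = ∑ j ∈ Finset.range N, (N:ℝ) * t * (t^j * (-1:ℝ)^((N-1)-j) * ((N-1).choose j : ℝ)) := by
        apply Finset.sum_congr rfl
        intro j hj
        rw [Finset.mem_range] at hj
        have h1 : N - (j+1) = (N-1) - j := by omega
        have h2 := key j
        rw [h1]
        calc ((j+1:ℕ):ℝ) * t^(j+1) * (-1:ℝ)^((N-1)-j) * (N.choose (j+1) : ℝ)
            = (((j+1:ℕ):ℝ) * (N.choose (j+1):ℝ)) * t^(j+1) * (-1:ℝ)^((N-1)-j) := by ring
          _ = ((N:ℝ) * ((N-1).choose j : ℝ)) * t^(j+1) * (-1:ℝ)^((N-1)-j) := by rw [h2]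
          _ = (N:ℝ) * t * (t^j * (-1:ℝ)^((N-1)-j) * ((N-1).choose j : ℝ)) := by ring
    _ = (N:ℝ) * t * ∑ j ∈ Finset.range N, (t^j * (-1:ℝ)^((N-1)-j) * ((N-1).choose j : ℝ)) := by
        rw [Finset.mul_sum]
    _ = N * t * (t-1)^(N-1) := by
        congr 1
        have hN1 : N = (N-1) + 1 := by omega
        rw [hN1]
        simpa using sum1 (N-1) t

lemma neg_one_sq_pow (e : ℕ) : ((-1:ℝ))^e * (-1)^e = 1 := by
  rw [← pow_add]; exact Even.neg_one_pow ⟨e, rfl⟩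

lemma divSumB (m a : ℕ) (t : ℝ) :
    divSum m (fun i => ((a+1+i.val : ℕ) : ℝ)) (fun x => t ^ x)
      = t^(a+1) * (t-1)^m / (Nat.factorial m) := by
  unfold divSum
  have hne2 : (m.factorial : ℝ) ≠ 0 := by exact_mod_cast Nat.factorial_ne_zero m
  have hterm : ∀ i : Fin (m+1),
      t ^ (((a+1+i.val:ℕ):ℝ)) / ∏ j ∈ Finset.univ.erase i,
          (((a+1+i.val:ℕ):ℝ) - ((a+1+j.val:ℕ):ℝ))
      = (t^(i.val) * (-1:ℝ)^(m-i.val) * (m.choose i.val)) * (t^(a+1) / m.factorial) := by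
    intro i
    have him : i.val ≤ m := by omega
    have hnum : t ^ (((a+1+i.val:ℕ):ℝ)) = t^(a+1) * t^(i.val) := by
      rw [Real.rpow_natCast, pow_add]
    have hden : ∏ j ∈ Finset.univ.erase i, (((a+1+i.val:ℕ):ℝ) - ((a+1+j.val:ℕ):ℝ))
        = (-1:ℝ)^(m-i.val) * (Nat.factorial i.val) * (Nat.factorial (m-i.val)) := by
      have h1 : ∀ j ∈ Finset.univ.erase i, (((a+1+i.val:ℕ):ℝ) - ((a+1+j.val:ℕ):ℝ))
          = (fun q : ℕ => ((i.val:ℝ) - (q:ℝ))) j.val := by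
        intro j _; push_cast; ring
      rw [Finset.prod_congr rfl h1, finErase i (fun q => ((i.val:ℝ) - (q:ℝ)))]
      exact prodA m i.val him
    rw [hnum, hden]
    have hf : (m.choose i.val : ℝ) * (Nat.factorial i.val) * (Nat.factorial (m-i.val))
        = m.factorial := by exact_mod_cast Nat.choose_mul_factorial_mul_factorial him
    have hs := neg_one_sq_pow (m - i.val)
    have hne1 : ((-1:ℝ)^(m-i.val) * (Nat.factorial i.val) * (Nat.factorial (m-i.val))) ≠ 0 := by
      refine mul_ne_zero (mul_ne_zero (pow_ne_zero _ (by norm_num)) ?_) ?_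
        <;> exact_mod_cast Nat.factorial_ne_zero _
    have hr : (t^(i.val) * (-1:ℝ)^(m-i.val) * (m.choose i.val)) * (t^(a+1) / m.factorial)
        = ((t^(i.val) * (-1:ℝ)^(m-i.val) * (m.choose i.val)) * t^(a+1)) / m.factorial := by
      ring
    rw [hr, div_eq_div_iff hne1 hne2]
    linear_combination (-(t^(a+1)*t^(i.val)))*hf
      - (t^(a+1)*t^(i.val)*((m.choose i.val:ℝ))*(Nat.factorial i.val)*(Nat.factorial (m-i.val)))*hs
  calc ∑ i : Fin (m+1), t ^ (((a+1+i.val:ℕ):ℝ)) / ∏ j ∈ Finset.univ.erase i,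
          (((a+1+i.val:ℕ):ℝ) - ((a+1+j.val:ℕ):ℝ))
      = ∑ i : Fin (m+1), (fun q : ℕ => t^q * (-1:ℝ)^(m-q) * (m.choose q)) i.val
          * (t^(a+1) / m.factorial) :=
        Finset.sum_congr rfl (fun i _ => hterm i)
    _ = (∑ q ∈ Finset.range (m+1), t^q * (-1:ℝ)^(m-q) * (m.choose q)) * (t^(a+1) / m.factorial) := by
        rw [← Finset.sum_mul, Fin.sum_univ_eq_sum_range (fun q => t^q * (-1:ℝ)^(m-q) * (m.choose q))]
    _ = t^(a+1) * (t-1)^m / (Nat.factorial m) := by rw [sum1]; ring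

lemma divSumC (m a c : ℕ) (hc : c ≤ m + 1) (t : ℝ) :
    divSum m (fun i => ((a + eF c i.val : ℕ) : ℝ)) (fun x => t ^ x)
      = t^a * (((m:ℝ)+1) * t * (t-1)^m - (c:ℝ) * (t-1)^(m+1)) / (Nat.factorial (m+1)) := by
  unfold divSum
  set N := m + 1 with hN
  have hne2 : (N.factorial : ℝ) ≠ 0 := by exact_mod_cast Nat.factorial_ne_zero N
  set g : ℕ → ℝ := fun q => t^a * t^q * ((q:ℝ) - (c:ℝ)) * (-1:ℝ)^(N-q) * (N.choose q) / N.factorial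
    with hg
  have hterm : ∀ i : Fin (m+1),
      t ^ (((a + eF c i.val:ℕ):ℝ)) / ∏ j ∈ Finset.univ.erase i,
          (((a + eF c i.val:ℕ):ℝ) - ((a + eF c j.val:ℕ):ℝ))
      = g (eF c i.val) := by
    intro i
    set q := eF c i.val with hq
    have hqN : q ≤ N := eF_le c i.val N i.isLt
    have hqc : q ≠ c := eF_ne c i.val
    have hnum : t ^ (((a + q:ℕ):ℝ)) = t^a * t^q := by
      rw [Real.rpow_natCast, pow_add]
    have h1 : ∀ j ∈ Finset.univ.erase i, (((a + q:ℕ):ℝ) - ((a + eF c j.val:ℕ):ℝ))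
        = (fun p : ℕ => ((q:ℝ) - ((eF c p:ℕ):ℝ))) j.val := by
      intro j _; push_cast; ring
    have hD := prodG N c i.val hc i.isLt
    rw [Finset.prod_congr rfl h1, finErase i (fun p : ℕ => ((q:ℝ) - ((eF c p:ℕ):ℝ)))]
    rw [← hq] at hD
    set D := ∏ j ∈ (Finset.range (m+1)).erase i.val, ((q:ℝ) - ((eF c j:ℕ):ℝ)) with hDdef
    have hqcR : ((q:ℝ) - (c:ℝ)) ≠ 0 := by
      refine sub_ne_zero.mpr ?_
      exact_mod_cast hqc
    have hrhs : ((-1:ℝ)^(N-q) * (Nat.factorial q) * (Nat.factorial (N-q))) ≠ 0 := by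
      refine mul_ne_zero (mul_ne_zero (pow_ne_zero _ (by norm_num)) ?_) ?_
        <;> exact_mod_cast Nat.factorial_ne_zero _
    have hDne : D ≠ 0 := by
      intro h0
      rw [h0, mul_zero] at hD
      exact hrhs hD.symm
    have hf : (N.choose q : ℝ) * (Nat.factorial q) * (Nat.factorial (N-q))
        = N.factorial := by exact_mod_cast Nat.choose_mul_factorial_mul_factorial hqN
    have hs := neg_one_sq_pow (N - q)
    rw [hnum, hg]
    rw [div_eq_div_iff hDne hne2]
    linear_combination (-(t^a*t^q*(-1:ℝ)^(N-q)*(N.choose q : ℝ))) * hD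
      - (t^a*t^q*((N.choose q:ℝ))*(Nat.factorial q)*(Nat.factorial (N-q))) * hs
      - (t^a*t^q) * hf
  rw [Finset.sum_congr rfl (fun i _ => hterm i)]
  rw [Fin.sum_univ_eq_sum_range (fun q => g (eF c q))]
  have himg : ∑ i ∈ Finset.range N, g (eF c i) = ∑ q ∈ Finset.range (N+1), g q := by
    rw [← Finset.sum_image (f := g) (g := eF c) (fun a _ b _ h => eF_inj c h), image_eF N c hc]
    exact Finset.sum_erase _ (by rw [hg]; simp)
  rw [himg]
  have hgsplit : ∀ q ∈ Finset.range (N+1), g q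
      = (t^a/(N.factorial:ℝ)) * ((q:ℝ)*t^q*(-1:ℝ)^(N-q)*(N.choose q : ℝ))
        - (t^a*(c:ℝ)/(N.factorial:ℝ)) * (t^q*(-1:ℝ)^(N-q)*(N.choose q : ℝ)) := by
    intro q _; rw [hg]; ring
  rw [Finset.sum_congr rfl hgsplit, Finset.sum_sub_distrib, ← Finset.mul_sum, ← Finset.mul_sum,
    sum2 N (by omega) t, sum1]
  have hN1 : N - 1 = m := by omega
  rw [hN1]
  push_cast
  rw [hN]; push_cast; ring

/-- Explicit Gelfond-Bernstein basis for the elementary Muntz space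
span(1, t, ..., t^(l-1), t^(l+1), ..., t^(n+1)) on [0,1]. -/
theorem stmt18 (l n : ℕ) (hl : 1 ≤ l) (hn : l ≤ n) (t : ℝ) (ht : t ∈ Set.Icc (0:ℝ) 1)
    (k : Fin (n+1)) :
    GB n (fun i => if (i : ℕ) < l then ((i : ℕ) : ℝ) else ((i : ℕ) : ℝ) + 1) k t =
      if (k : ℕ) < l then
        (((l : ℝ) - (k : ℕ)) / l) * (((n+1).choose (k : ℕ)) : ℝ) * t ^ (k : ℕ)
          * (1 - t) ^ (n - (k : ℕ))
          * (1 + (((n : ℝ) - l + 1) / ((l : ℝ) - (k : ℕ))) * t)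
      else (((n+1).choose ((k : ℕ) + 1)) : ℝ) * t ^ ((k : ℕ) + 1) * (1 - t) ^ (n - (k : ℕ)) := by
  by_cases hkn : (k:ℕ) = n
  · have hkl : ¬ ((k:ℕ) < l) := by omega
    rw [if_neg hkl]
    simp only [GB, if_pos hkn]
    rw [if_neg hkl]
    have h1 : ((k:ℕ):ℝ) + 1 = (((n+1:ℕ)):ℝ) := by
      have : (k:ℕ) + 1 = n + 1 := by omega
      exact_mod_cast this
    rw [h1, Real.rpow_natCast]
    have h2 : (k:ℕ) + 1 = n + 1 := by omega
    rw [h2, Nat.choose_self, hkn, Nat.sub_self]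
    simp
  · have hkn' : (k:ℕ) < n := by have := k.isLt; omega
    simp only [GB, if_neg hkn]
    by_cases hkl : (k:ℕ) < l
    · -- case C : k < l
      rw [if_pos hkl]
      have hxC : (fun i : Fin (n-(k:ℕ)+1) =>
          if (k:ℕ)+(i:ℕ) < l then (((k:ℕ)+(i:ℕ):ℕ):ℝ) else (((k:ℕ)+(i:ℕ):ℕ):ℝ)+1)
          = (fun i : Fin (n-(k:ℕ)+1) => (((k:ℕ) + eF (l - (k:ℕ)) (i:ℕ) : ℕ):ℝ)) := by
        funext i; unfold eF
        by_cases h : (i:ℕ) < l - (k:ℕ)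
        · rw [if_pos (by omega), if_pos h]
        · rw [if_neg (by omega), if_neg h]; push_cast; ring
      rw [hxC, divSumC (n-(k:ℕ)) (k:ℕ) (l-(k:ℕ)) (by omega) t]
      have hprodC : ∏ j ∈ Finset.Ioi k,
          (if (j:ℕ) < l then ((j:ℕ):ℝ) else ((j:ℕ):ℝ)+1)
          = ((n+1).factorial : ℝ) / ((((k:ℕ)).factorial:ℝ) * l) := by
        rw [finIoi k (fun q => if q < l then (q:ℝ) else (q:ℝ)+1)]
        have hsplit : Finset.Ico ((k:ℕ)+1) (n+1)
            = Finset.Ico ((k:ℕ)+1) l ∪ Finset.Ico l (n+1) :=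
          (Finset.Ico_union_Ico_eq_Ico (by omega) (by omega)).symm
        rw [hsplit, Finset.prod_union (Finset.Ico_disjoint_Ico_consecutive _ _ _)]
        have e1 : ∏ q ∈ Finset.Ico ((k:ℕ)+1) l, (if q < l then (q:ℝ) else (q:ℝ)+1)
            = ((∏ q ∈ Finset.Ico ((k:ℕ)+1) l, q : ℕ) : ℝ) := by
          rw [Nat.cast_prod]
          exact Finset.prod_congr rfl fun q hq => by
            rw [Finset.mem_Ico] at hq; rw [if_pos hq.2]
        have e2 : ∏ q ∈ Finset.Ico l (n+1), (if q < l then (q:ℝ) else (q:ℝ)+1)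
            = ((∏ q ∈ Finset.Ico l (n+1), (q+1) : ℕ) : ℝ) := by
          rw [Nat.cast_prod]
          refine Finset.prod_congr rfl fun q hq => by
            rw [Finset.mem_Ico] at hq; rw [if_neg (by omega)]; push_cast; ring
        have n1 : ((k:ℕ)).factorial * ∏ q ∈ Finset.Ico ((k:ℕ)+1) l, q = (l-1).factorial := by
          have h0 := factIco (k:ℕ) (l-1) (by omega)
          have heq : ∏ j ∈ Finset.Ico (k:ℕ) (l-1), (j+1) = ∏ q ∈ Finset.Ico ((k:ℕ)+1) l, q := by
            rw [Finset.prod_Ico_eq_prod_range, Finset.prod_Ico_eq_prod_range]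
            apply Finset.prod_congr (by congr 1; omega) (fun j _ => by omega)
          rw [heq] at h0; exact h0
        have n2 : l.factorial * ∏ q ∈ Finset.Ico l (n+1), (q+1) = (n+1).factorial :=
          factIco l (n+1) (by omega)
        have n3 : l * (l-1).factorial = l.factorial := Nat.mul_factorial_pred (by omega)
        have h5 : l * (((k:ℕ)).factorial * ∏ q ∈ Finset.Ico ((k:ℕ)+1) l, q)
            * ∏ q ∈ Finset.Ico l (n+1), (q+1) = (n+1).factorial := by
          rw [n1, n3, n2]
        have nat4 : ((k:ℕ)).factorial * l *
            ((∏ q ∈ Finset.Ico ((k:ℕ)+1) l, q) * ∏ q ∈ Finset.Ico l (n+1), (q+1))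
            = (n+1).factorial := by rw [← h5]; ring
        have hden : ((((k:ℕ)).factorial:ℝ) * l) ≠ 0 := by
          refine mul_ne_zero ?_ ?_
          · exact_mod_cast Nat.factorial_ne_zero _
          · exact_mod_cast by omega
        rw [e1, e2, eq_div_iff hden]
        have r4 : (((k:ℕ)).factorial : ℝ) * l *
            (((∏ q ∈ Finset.Ico ((k:ℕ)+1) l, q : ℕ):ℝ) *
              ((∏ q ∈ Finset.Ico l (n+1), (q+1) : ℕ):ℝ))
            = ((n+1).factorial:ℝ) := by exact_mod_cast nat4
        linear_combination r4
      rw [hprodC]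
      have hC : ((n+1).choose ((k:ℕ)) : ℝ) * (((k:ℕ)).factorial:ℝ)
          * ((n-(k:ℕ)+1).factorial:ℝ) = ((n+1).factorial:ℝ) := by
        have h0 := Nat.choose_mul_factorial_mul_factorial (show (k:ℕ) ≤ n+1 by omega)
        have h2 : n+1-((k:ℕ)) = n-(k:ℕ)+1 := by omega
        rw [h2] at h0; exact_mod_cast h0
      have key : ((-1:ℝ)^(n-(k:ℕ))) * ( (((n:ℝ)-(k:ℕ))+1) * t * (t-1)^(n-(k:ℕ))
            - ((l:ℝ)-(k:ℕ)) * (t-1)^((n-(k:ℕ))+1) )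
          = (1-t)^(n-(k:ℕ)) * ( ((l:ℝ)-(k:ℕ)) + ((n:ℝ)-l+1) * t ) := by
        have hsign' : (-1:ℝ)^(n-(k:ℕ)) * (t-1)^(n-(k:ℕ)) = (1-t)^(n-(k:ℕ)) := by
          rw [← mul_pow]; congr 1; ring
        rw [pow_succ]
        linear_combination ((((n:ℝ)-(k:ℕ))+1)*t - ((l:ℝ)-(k:ℕ))*(t-1)) * hsign'
      rw [Nat.cast_sub (le_of_lt hkn'), Nat.cast_sub (le_of_lt hkl)]
      have f0 : ((l:ℝ)) ≠ 0 := by exact_mod_cast by omega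
      have f1 : (((k:ℕ)).factorial:ℝ) ≠ 0 := by exact_mod_cast Nat.factorial_ne_zero _
      have f2 : ((n-(k:ℕ)+1).factorial:ℝ) ≠ 0 := by exact_mod_cast Nat.factorial_ne_zero _
      have f3 : ((l:ℝ)-(k:ℕ)) ≠ 0 := by
        have : ((k:ℕ):ℝ) < (l:ℝ) := by exact_mod_cast hkl
        intro h; linarith
      calc (-1:ℝ)^(n-(k:ℕ)) * (((n+1).factorial:ℝ) / ((((k:ℕ)).factorial:ℝ) * l))
            * (t^((k:ℕ)) * ((((n:ℝ)-(k:ℕ))+1) * t * (t-1)^(n-(k:ℕ))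
              - ((l:ℝ)-(k:ℕ)) * (t-1)^(n-(k:ℕ)+1)) / ((n-(k:ℕ)+1).factorial:ℝ))
          = (((n+1).factorial:ℝ) / ((((k:ℕ)).factorial:ℝ) * l)) * t^((k:ℕ))
            * (((-1:ℝ)^(n-(k:ℕ))) * ((((n:ℝ)-(k:ℕ))+1) * t * (t-1)^(n-(k:ℕ))
              - ((l:ℝ)-(k:ℕ)) * (t-1)^((n-(k:ℕ))+1))) / ((n-(k:ℕ)+1).factorial:ℝ) := by
            ring
        _ = (((n+1).factorial:ℝ) / ((((k:ℕ)).factorial:ℝ) * l)) * t^((k:ℕ))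
            * ((1-t)^(n-(k:ℕ)) * ( ((l:ℝ)-(k:ℕ)) + ((n:ℝ)-l+1) * t ))
            / ((n-(k:ℕ)+1).factorial:ℝ) := by rw [key]
        _ = (((l:ℝ) - (k:ℕ)) / l) * (((n+1).choose ((k:ℕ))) : ℝ) * t ^ ((k:ℕ))
            * (1 - t) ^ (n - (k:ℕ))
            * (1 + (((n:ℝ) - l + 1) / ((l:ℝ) - (k:ℕ))) * t) := by
            rw [← hC]
            field_simp
    · -- case B : k ≥ l
      rw [if_neg hkl]
      have hxB : (fun i : Fin (n - (k:ℕ) + 1) =>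
          if (k:ℕ)+(i:ℕ) < l then (((k:ℕ)+(i:ℕ):ℕ):ℝ) else (((k:ℕ)+(i:ℕ):ℕ):ℝ)+1)
          = (fun i : Fin (n - (k:ℕ) + 1) => (((k:ℕ)+1+(i:ℕ) : ℕ):ℝ)) := by
        funext i; rw [if_neg (by omega)]; push_cast; ring
      rw [hxB, divSumB]
      have hprodB : ∏ j ∈ Finset.Ioi k,
          (if (j:ℕ) < l then ((j:ℕ):ℝ) else ((j:ℕ):ℝ)+1)
          = ((n+1).factorial : ℝ) / ((((k:ℕ)+1).factorial:ℝ)) := by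
        rw [finIoi k (fun q => if q < l then (q:ℝ) else (q:ℝ)+1)]
        have e2 : ∏ q ∈ Finset.Ico ((k:ℕ)+1) (n+1), (if q < l then (q:ℝ) else (q:ℝ)+1)
            = ((∏ q ∈ Finset.Ico ((k:ℕ)+1) (n+1), (q+1) : ℕ) : ℝ) := by
          rw [Nat.cast_prod]
          refine Finset.prod_congr rfl fun q hq => by
            rw [Finset.mem_Ico] at hq; rw [if_neg (by omega)]; push_cast; ring
        have n2 : ((k:ℕ)+1).factorial * ∏ q ∈ Finset.Ico ((k:ℕ)+1) (n+1), (q+1)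
            = (n+1).factorial := factIco ((k:ℕ)+1) (n+1) (by omega)
        have hden : ((((k:ℕ)+1).factorial:ℝ)) ≠ 0 := by
          exact_mod_cast Nat.factorial_ne_zero _
        rw [e2, eq_div_iff hden]
        have r4 : ((((k:ℕ)+1).factorial):ℝ) *
            ((∏ q ∈ Finset.Ico ((k:ℕ)+1) (n+1), (q+1) : ℕ):ℝ) = ((n+1).factorial:ℝ) := by
          exact_mod_cast n2
        linear_combination r4
      rw [hprodB]
      have hC : ((n+1).choose ((k:ℕ)+1) : ℝ) * (((k:ℕ)+1).factorial:ℝ)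
          * ((n-(k:ℕ)).factorial:ℝ) = ((n+1).factorial:ℝ) := by
        have h0 := Nat.choose_mul_factorial_mul_factorial (show (k:ℕ)+1 ≤ n+1 by omega)
        have h2 : n+1-((k:ℕ)+1) = n-(k:ℕ) := by omega
        rw [h2] at h0; exact_mod_cast h0
      have hs := neg_one_sq_pow (n - (k:ℕ))
      have hsign : (t-1)^(n-(k:ℕ)) = (-1:ℝ)^(n-(k:ℕ)) * (1-t)^(n-(k:ℕ)) := by
        rw [show t-1 = -(1-t) by ring, neg_pow]
      have f1 : (((k:ℕ)+1).factorial:ℝ) ≠ 0 := by exact_mod_cast Nat.factorial_ne_zero _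
      have f2 : ((n-(k:ℕ)).factorial:ℝ) ≠ 0 := by exact_mod_cast Nat.factorial_ne_zero _
      rw [hsign]
      field_simp
      linear_combination (((n+1).factorial:ℝ) * t^((k:ℕ)+1)*(1-t)^(n-(k:ℕ))) * hs
        - (t^((k:ℕ)+1)*(1-t)^(n-(k:ℕ))) * hC
end

section
/- Let l \ge 0 and n \ge 1 be integers and \Lambda = (0, l+1, l+2, ..., l+n). The Gelfond-Bernstein basis of span(1, t^{l+1}, ..., t^{l+n}) on [0,1] is H_0(t) = (1-t)^n \sum_{j=0}^{l} \binom{n+j-1}{n-1} t^j and H_k(t) = \binom{n+l}{k+l} t^{l+k} (1-t)^{n-k} for k = 1, ..., n. -/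
section GBhelpers
open Finset Nat

lemma prod_fact (a : ℕ) : ∀ m : ℕ, ∏ s ∈ range m, ((a:ℝ)+1+s) = (a+m)! / a ! := by
  intro m
  induction m with
  | zero =>
    simp [div_self (show ((a ! : ℝ)) ≠ 0 by positivity)]
  | succ m ih =>
    rw [prod_range_succ, ih, Nat.add_succ, Nat.factorial_succ]
    have : (a ! : ℝ) ≠ 0 := by positivity
    push_cast
    field_simp
    ring

lemma prod_range_cast (c : ℕ) : ∏ j ∈ range c, ((c:ℝ) - j) = c ! := by
  have h := Finset.prod_range_reflect (fun j => ((j:ℝ)+1)) c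
  have h2 : ∏ j ∈ range c, ((c:ℝ) - j) = ∏ j ∈ range c, (((c - 1 - j : ℕ):ℝ)+1) := by
    apply Finset.prod_congr rfl
    intro j hj
    simp only [mem_range] at hj
    rw [show ((c - 1 - j : ℕ):ℝ) = ((c - j : ℕ):ℝ) - 1 by
      rw [Nat.cast_sub (by omega), Nat.cast_sub (by omega), Nat.cast_sub (by omega)]
      push_cast; ring]
    rw [Nat.cast_sub (by omega)]
    ring
  rw [h2, h]
  rw_mod_cast [Finset.prod_range_add_one_eq_factorial]

lemma prod_range_erase (p c : ℕ) (hc : c ≤ p) :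
    ∏ j ∈ (range (p+1)).erase c, ((c:ℝ) - j) = (-1)^(p-c) * c ! * (p-c)! := by
  have hset : (range (p+1)).erase c = range c ∪ Ico (c+1) (p+1) := by
    ext m; simp [Finset.mem_erase, Finset.mem_range, Finset.mem_Ico, Finset.mem_union]; omega
  have hdisj : Disjoint (range c) (Ico (c+1) (p+1)) := by
    simp [Finset.disjoint_left, Finset.mem_range, Finset.mem_Ico]; omega
  rw [hset, Finset.prod_union hdisj, prod_range_cast]
  have h2 : ∏ j ∈ Ico (c+1) (p+1), ((c:ℝ) - j) = (-1)^(p-c) * (p-c)! := by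
    rw [Finset.prod_Ico_eq_prod_range]
    have he : p + 1 - (c+1) = p - c := by omega
    rw [he]
    have : ∀ k ∈ range (p-c), ((c:ℝ) - ((c + 1 + k : ℕ):ℝ)) = -1 * ((k:ℝ)+1) := by
      intro k hk; push_cast; ring
    rw [Finset.prod_congr rfl this, Finset.prod_mul_distrib, Finset.prod_const,
      Finset.card_range]
    have hp : ∏ k ∈ range (p-c), ((k:ℝ)+1) = ((p-c)! : ℝ) := by
      rw [← Finset.prod_range_add_one_eq_factorial]
      push_cast
      rfl
    rw [hp]
  rw [h2]; ring

lemma sum_consec (p M : ℕ) (t : ℝ) :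
    ∑ i ∈ range (p+1), t^(M+i) / ((-1:ℝ)^(p-i) * i ! * (p-i)!)
      = t^M * (t-1)^p / p ! := by
  have hb : (t - 1)^p = ∑ i ∈ range (p+1), t^i * (-1:ℝ)^(p-i) * (p.choose i) := by
    have := add_pow t (-1:ℝ) p
    simpa [← sub_eq_add_neg] using this
  rw [hb, Finset.mul_sum, Finset.sum_div]
  apply Finset.sum_congr rfl
  intro i hi
  simp only [mem_range] at hi
  have hip : i ≤ p := by omega
  have hfact : ((p.choose i : ℝ)) * (i ! * (p-i)!) = (p ! : ℝ) := by
    rw_mod_cast [← Nat.choose_mul_factorial_mul_factorial hip]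
    push_cast; ring
  have h1 : ((i ! : ℝ)) ≠ 0 := by positivity
  have h2 : (((p-i) ! : ℝ)) ≠ 0 := by positivity
  have h3 : ((p ! : ℝ)) ≠ 0 := by positivity
  have h4 : ((-1:ℝ))^(p-i) ≠ 0 := by
    simp
  rw [pow_add]
  field_simp
  have hs : ((-1:ℝ))^(p-i) * (-1)^(p-i) = 1 := by rw [← mul_pow]; norm_num
  linear_combination (-(t^M*t^i))*hfact +
    (-(t^M*t^i)*((p.choose i : ℝ))*((i ! : ℝ))*(((p-i)! : ℝ)))*hs
lemma fin_erase_prod {N : ℕ} (i : Fin N) (g : ℕ → ℝ) :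
    ∏ j ∈ Finset.univ.erase i, g (j:ℕ) = ∏ j ∈ (Finset.range N).erase (i:ℕ), g j := by
  have himg : (Finset.univ.erase i).image Fin.val = (Finset.range N).erase (i:ℕ) := by
    ext m
    simp only [Finset.mem_image, Finset.mem_erase, Finset.mem_univ, and_true,
      Finset.mem_range]
    constructor
    · rintro ⟨a, ha, rfl⟩
      exact ⟨fun h => ha (Fin.ext h), a.isLt⟩
    · rintro ⟨hm, hlt⟩
      exact ⟨⟨m, hlt⟩, fun h => hm (congrArg Fin.val h), rfl⟩
  rw [← himg, Finset.prod_image (fun x _ y _ h => Fin.val_injective h)]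

lemma divSum_eq_range (N : ℕ) (g : ℕ → ℝ) (f : ℝ → ℝ) :
    divSum N (fun i => g i.val) f
      = ∑ i ∈ range (N+1), f (g i) / ∏ j ∈ (range (N+1)).erase i, (g i - g j) := by
  unfold divSum
  rw [← Fin.sum_univ_eq_sum_range (fun i => f (g i) / ∏ j ∈ (range (N+1)).erase i, (g i - g j))]
  apply Finset.sum_congr rfl
  intro i _
  rw [fin_erase_prod i (fun j => g i.val - g j)]

lemma ioi_prod {n : ℕ} (k : Fin (n+1)) (g : ℕ → ℝ) :
    ∏ j ∈ Finset.Ioi k, g (j:ℕ) = ∏ j ∈ Finset.Ico ((k:ℕ)+1) (n+1), g j := by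
  have himg : (Finset.Ioi k).image Fin.val = Finset.Ico ((k:ℕ)+1) (n+1) := by
    ext m
    simp only [Finset.mem_image, Finset.mem_Ioi, Finset.mem_Ico]
    constructor
    · rintro ⟨a, ha, rfl⟩
      exact ⟨Fin.lt_def.mp ha, a.isLt⟩
    · rintro ⟨hm, hlt⟩
      exact ⟨⟨m, hlt⟩, Fin.lt_def.mpr hm, rfl⟩
  rw [← himg, Finset.prod_image (fun x _ y _ h => Fin.val_injective h)]

lemma GB_pos (l n : ℕ) (k : Fin (n+1)) (hk : 1 ≤ (k:ℕ)) (t : ℝ) :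
    GB n (fun i => if (i : ℕ) = 0 then 0 else (l : ℝ) + (i : ℕ)) k t
      = (((n + l).choose ((k : ℕ) + l)) : ℝ) * t ^ (l + (k : ℕ)) * (1 - t) ^ (n - (k : ℕ)) := by
  by_cases hkn : (k:ℕ) = n
  · rw [GB, if_pos hkn]
    have h0 : ¬ ((k:ℕ) = 0) := by omega
    simp only [h0, if_false]
    rw [show ((l:ℝ) + (k:ℕ)) = (((l + (k:ℕ) : ℕ)):ℝ) by push_cast; ring,
      Real.rpow_natCast]
    rw [hkn, show n + l = l + n by ring, Nat.choose_self]
    simp [hkn]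
  · rw [GB, if_neg hkn]
    set p := n - (k:ℕ) with hp
    have hkn' : (k:ℕ) < n := lt_of_le_of_ne (by omega) hkn
    have hpn : (k:ℕ) + p = n := by omega
    -- the points
    have hx : (fun i : Fin (p+1) =>
        (fun i : Fin (n+1) => if (i : ℕ) = 0 then (0:ℝ) else (l : ℝ) + (i : ℕ))
          ⟨(k:ℕ) + i.val, by have h1 := i.isLt; have h2 := k.isLt; omega⟩)
        = fun i : Fin (p+1) => (fun j : ℕ => (((l + (k:ℕ) + j : ℕ)):ℝ)) i.val := by
      funext i
      have : ¬ ((k:ℕ) + i.val = 0) := by omega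
      simp only [this, if_false]
      push_cast; ring
    rw [hx, divSum_eq_range (n - (k:ℕ)) (fun j => (((l + (k:ℕ) + j : ℕ)):ℝ)) (fun x => t ^ x)]
    -- each term
    have hterm : ∀ i ∈ range (p+1),
        (fun x => t ^ x) ((((l + (k:ℕ) + i : ℕ)):ℝ)) /
          ∏ j ∈ (range (p+1)).erase i, ((((l + (k:ℕ) + i : ℕ)):ℝ) - (((l + (k:ℕ) + j : ℕ)):ℝ))
        = t ^ (l + (k:ℕ) + i) / ((-1:ℝ)^(p-i) * i ! * (p-i)!) := by
      intro i hi
      simp only [mem_range] at hi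
      show t ^ (((l + (k:ℕ) + i : ℕ)):ℝ) / _ = _
      rw [Real.rpow_natCast]
      congr 1
      rw [show (∏ j ∈ (range (p+1)).erase i,
          ((((l + (k:ℕ) + i : ℕ)):ℝ) - (((l + (k:ℕ) + j : ℕ)):ℝ)))
        = ∏ j ∈ (range (p+1)).erase i, ((i:ℝ) - (j:ℝ)) from
        Finset.prod_congr rfl (fun j _ => by push_cast; ring)]
      exact prod_range_erase p i (by omega)
    rw [Finset.sum_congr rfl hterm, sum_consec]
    -- the product over Ioi
    have hioi : (∏ j ∈ Finset.Ioi k,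
        (fun i : Fin (n+1) => if (i : ℕ) = 0 then (0:ℝ) else (l : ℝ) + (i : ℕ)) j)
        = ((l+n)! : ℝ) / ((l+(k:ℕ))! : ℝ) := by
      rw [ioi_prod k (fun j => if j = 0 then (0:ℝ) else (l:ℝ) + j)]
      rw [show (∏ j ∈ Finset.Ico ((k:ℕ)+1) (n+1), (if j = 0 then (0:ℝ) else (l:ℝ) + j))
          = ∏ j ∈ Finset.Ico ((k:ℕ)+1) (n+1), ((l:ℝ) + j) from
        Finset.prod_congr rfl (fun j hj => by
          rw [Finset.mem_Ico] at hj
          have : ¬ (j = 0) := by omega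
          simp [this])]
      rw [Finset.prod_Ico_eq_prod_range]
      have : n + 1 - ((k:ℕ)+1) = p := by omega
      rw [this]
      have heq : ∀ s ∈ range p, ((l:ℝ) + (((k:ℕ)+1+s : ℕ):ℝ)) = (((l+(k:ℕ)):ℕ):ℝ) + 1 + s := by
        intro s _; push_cast; ring
      rw [Finset.prod_congr rfl heq, prod_fact]
      rw [show l + (k:ℕ) + p = l + n by omega]
    rw [hioi]
    -- final algebra
    have hC : (((n + l).choose ((k : ℕ) + l)) : ℝ)
        = ((n+l)! : ℝ) / ((((k:ℕ)+l)! : ℝ) * ((p ! : ℝ))) := by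
      rw [Nat.cast_choose ℝ (show (k:ℕ) + l ≤ n + l by omega)]
      rw [show n + l - ((k:ℕ) + l) = p by omega]
    rw [hC]
    have hsub : (t - 1)^p = (-1:ℝ)^p * (1-t)^p := by
      rw [show t - 1 = -(1-t) by ring, neg_pow]
    rw [hsub]
    have hs : ((-1:ℝ))^p * (-1)^p = 1 := by rw [← mul_pow]; norm_num
    have h1 : ((((k:ℕ)+l)! : ℝ)) ≠ 0 := by positivity
    have h2 : ((p ! : ℝ)) ≠ 0 := by positivity
    have h3 : (((l+(k:ℕ))! : ℝ)) ≠ 0 := by positivity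
    rw [show ((k:ℕ)+l)! = (l+(k:ℕ))! by rw [Nat.add_comm]]
    rw [show n + l = l + n from by ring] at *
    field_simp
    ring_nf
    linear_combination (t^(l+(k:ℕ))*(1-t)^(n-(k:ℕ))) * (by rw [← hp]; exact hs : ((-1:ℝ))^(n-(k:ℕ)) * (-1)^(n-(k:ℕ)) = 1)


noncomputable def gfun (l : ℕ) (j : ℕ) : ℝ := if j = 0 then 0 else (l:ℝ) + j

noncomputable def Efun (l m : ℕ) (t : ℝ) : ℝ :=
  1 + ∑ s ∈ range (m+1), (-1:ℝ)^(s+1) *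
    (((l+m+1)! : ℝ) / ((l ! : ℝ) * ((l:ℝ)+s+1) * (s ! : ℝ) * (((m-s)! : ℝ)))) * t^(l+s+1)

lemma GB_zero (l m : ℕ) (t : ℝ) :
    GB (m+1) (fun i => if (i : ℕ) = 0 then 0 else (l : ℝ) + (i : ℕ)) 0 t = Efun l m t := by
  set n := m + 1 with hn
  have h0ne : ¬ ((0 : Fin (n+1)).val = n) := by simp [hn]
  rw [GB, if_neg h0ne]
  simp only [Fin.val_zero, Nat.sub_zero, Nat.zero_add]
  -- the points
  have hx : (fun i : Fin (n+1) =>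
      (fun i : Fin (n+1) => if (i : ℕ) = 0 then (0:ℝ) else (l : ℝ) + (i : ℕ))
        ⟨i.val, by have h1 := i.isLt; have h2 := (0 : Fin (n+1)).isLt; omega⟩)
      = fun i : Fin (n+1) => gfun l i.val := by
    funext i
    rfl
  rw [hx, divSum_eq_range n (gfun l) (fun x => t ^ x)]
  -- product over Ioi 0
  have hPi : (∏ j ∈ Finset.Ioi (0 : Fin (n+1)), gfun l j.val)
      = ((l+n)! : ℝ) / (l ! : ℝ) := by
    rw [ioi_prod (0 : Fin (n+1)) (gfun l)]
    simp only [Fin.val_zero, Nat.zero_add]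
    rw [Finset.prod_Ico_eq_prod_range]
    have he : n + 1 - 1 = n := by omega
    rw [he]
    have heq : ∀ s ∈ range n, gfun l (1 + s) = (l:ℝ) + 1 + s := by
      intro s _
      rw [gfun, if_neg (by omega)]
      push_cast; ring
    rw [Finset.prod_congr rfl heq, prod_fact]
  rw [hPi]
  -- split the sum
  rw [Finset.sum_range_succ']
  -- term 0
  have hset0 : (range (n+1)).erase 0 = (range n).image (· + 1) := by
    ext a
    simp only [Finset.mem_erase, Finset.mem_range, Finset.mem_image]
    constructor
    · rintro ⟨h1, h2⟩; exact ⟨a - 1, by omega, by omega⟩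
    · rintro ⟨b, h1, h2⟩; omega
  have hterm0 : (fun x => t ^ x) (gfun l 0) /
      ∏ j ∈ (range (n+1)).erase 0, (gfun l 0 - gfun l j)
      = 1 / ((-1:ℝ)^n * (((l+n)! : ℝ) / (l ! : ℝ))) := by
    rw [show gfun l 0 = 0 from rfl]
    rw [show ((fun x => t ^ x) (0:ℝ)) = 1 from Real.rpow_zero t]
    congr 1
    rw [hset0, Finset.prod_image (by intro a _ b _ h; simp only at h; omega)]
    have heq : ∀ s ∈ range n, ((0:ℝ) - gfun l (s + 1)) = -1 * ((l:ℝ) + 1 + s) := by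
      intro s _
      rw [gfun, if_neg (by omega)]
      push_cast; ring
    rw [Finset.prod_congr rfl heq, Finset.prod_mul_distrib, Finset.prod_const,
      Finset.card_range, prod_fact]
  rw [hterm0]
  -- other terms
  have hterm : ∀ s ∈ range n, t ^ gfun l (s+1) /
      ∏ j ∈ (range (n+1)).erase (s+1), (gfun l (s+1) - gfun l j)
      = t ^ (l+s+1) / (((l:ℝ)+s+1) * ((-1:ℝ)^(m-s) * (s ! : ℝ) * (((m-s)! : ℝ)))) := by
    intro s hs
    simp only [mem_range, hn] at hs
    have hg : gfun l (s+1) = (((l+s+1 : ℕ)):ℝ) := by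
      rw [gfun, if_neg (by omega)]; push_cast; ring
    rw [hg, Real.rpow_natCast]
    congr 1
    have h0mem : 0 ∈ (range (n+1)).erase (s+1) := by
      simp [Finset.mem_erase, Finset.mem_range]
    rw [← Finset.mul_prod_erase _ _ h0mem]
    rw [show gfun l 0 = 0 from rfl, sub_zero]
    have hset : ((range (n+1)).erase (s+1)).erase 0 = ((range n).erase s).image (· + 1) := by
      ext a
      simp only [Finset.mem_erase, Finset.mem_range, Finset.mem_image]
      constructor
      · rintro ⟨h1, h2, h3⟩; exact ⟨a - 1, ⟨by omega, by omega⟩, by omega⟩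
      · rintro ⟨b, ⟨h1, h2⟩, h3⟩; omega
    rw [hset, Finset.prod_image (by intro a _ b _ h; simp only at h; omega)]
    have heq : ∀ j ∈ (range n).erase s, ((((l+s+1 : ℕ)):ℝ) - gfun l (j + 1))
        = ((s:ℝ) - (j:ℝ)) := by
      intro j _
      rw [gfun, if_neg (by omega)]
      push_cast; ring
    rw [Finset.prod_congr rfl heq]
    rw [show (range n) = range (m+1) from by rw [hn]]
    rw [prod_range_erase m s (by omega)]
    push_cast
    ring
  rw [Finset.sum_congr rfl hterm, Efun, mul_add, Finset.mul_sum]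
  have hfl : ((l ! : ℝ)) ≠ 0 := by positivity
  have hfln : (((l+n)! : ℝ)) ≠ 0 := by positivity
  have hB : ((-1:ℝ))^n * (((l+n)! : ℝ) / (l ! : ℝ)) *
      (1 / ((-1:ℝ)^n * (((l+n)! : ℝ) / (l ! : ℝ)))) = 1 := by
    rw [mul_one_div, div_self]
    apply mul_ne_zero (by simp)
    positivity
  rw [hB, add_comm]
  congr 1
  rw [show range n = range (m+1) from by rw [hn]]
  apply Finset.sum_congr rfl
  intro s hs
  simp only [mem_range] at hs
  have hsm : s ≤ m := by omega
  have hsgn : ((-1:ℝ))^(m-s) * (-1:ℝ)^(m-s) = 1 := by rw [← mul_pow]; norm_num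
  have hpow : ((-1:ℝ))^n = (-1:ℝ)^(m-s) * (-1:ℝ)^(s+1) := by
    rw [← pow_add, hn]
    congr 1
    omega
  rw [hpow, show l + n = l + m + 1 from by rw [hn]; ring]
  have h1 : ((s ! : ℝ)) ≠ 0 := by positivity
  have h2 : ((((m-s)! : ℝ))) ≠ 0 := by positivity
  have h3 : ((l:ℝ)+s+1) ≠ 0 := by positivity
  field_simp


lemma Estep (l m : ℕ) (t : ℝ) :
    Efun (l+1) m t = Efun l m t + ((m+1+l).choose (l+1) : ℝ) * t^(l+1) * (1-t)^(m+1) := by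
  have hbin : (1-t)^(m+1) = ∑ a ∈ range (m+2), (-t)^a * (((m+1).choose a : ℕ) : ℝ) := by
    have h := add_pow (-t) (1:ℝ) (m+1)
    rw [show -t + 1 = 1 - t by ring] at h
    rw [h]
    apply Finset.sum_congr rfl
    intro a _
    rw [one_pow]
    ring
  rw [Efun, Efun, hbin, Finset.mul_sum]
  set d : ℝ := ((m+1+l).choose (l+1) : ℝ) with hd
  -- peel last term of the (l+1) sum
  have hA := Finset.sum_range_succ (fun s => (-1:ℝ)^(s+1) *
    ((((l+1)+m+1)! : ℝ) / (((l+1)! : ℝ) * (((l+1:ℕ):ℝ)+s+1) * (s ! : ℝ) * (((m-s)! : ℝ)))) *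
    t^((l+1)+s+1)) m
  -- peel first term of the l sum
  have hB := Finset.sum_range_succ' (fun s => (-1:ℝ)^(s+1) *
    (((l+m+1)! : ℝ) / ((l ! : ℝ) * ((l:ℝ)+s+1) * (s ! : ℝ) * (((m-s)! : ℝ)))) *
    t^(l+s+1)) m
  -- peel both ends of the binomial sum
  have hW1 := Finset.sum_range_succ (fun a => d * t^(l+1) * ((-t)^a * (((m+1).choose a : ℕ) : ℝ))) (m+1)
  have hW2 := Finset.sum_range_succ' (fun a => d * t^(l+1) * ((-t)^a * (((m+1).choose a : ℕ) : ℝ))) m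
  rw [hA, hB, hW1, hW2]
  have hmid : ∀ s ∈ range m,
      (-1:ℝ) ^ (s + 1) * (((l + 1 + m + 1)! : ℝ) /
          (((l + 1)! : ℝ) * (((l + 1 : ℕ):ℝ) + s + 1) * (s ! : ℝ) * ((m - s)! : ℝ))) *
        t ^ (l + 1 + s + 1)
      = (-1:ℝ) ^ (s + 1 + 1) * (((l + m + 1)! : ℝ) /
          ((l ! : ℝ) * ((l:ℝ) + ((s + 1 : ℕ):ℝ) + 1) * ((s + 1)! : ℝ) * ((m - (s + 1))! : ℝ))) *
          t ^ (l + (s + 1) + 1)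
        + d * t ^ (l + 1) * ((-t) ^ (s + 1) * (((m + 1).choose (s + 1) : ℕ) : ℝ)) := by
    intro s hs
    simp only [mem_range] at hs
    obtain ⟨e, rfl⟩ : ∃ e, m = s + e + 1 := ⟨m - s - 1, by omega⟩
    rw [show s + e + 1 - s = e + 1 by omega, show s + e + 1 - (s + 1) = e by omega]
    rw [hd, Nat.cast_choose ℝ (show l + 1 ≤ s + e + 1 + 1 + l by omega),
      Nat.cast_choose ℝ (show s + 1 ≤ s + e + 1 + 1 by omega)]
    rw [show s + e + 1 + 1 + l - (l + 1) = s + e + 1 by omega,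
      show s + e + 1 + 1 - (s + 1) = e + 1 by omega]
    rw [show l + 1 + (s + e + 1) + 1 = (l + (s + e + 1) + 1) + 1 by omega,
      show s + e + 1 + 1 + l = (l + (s + e + 1) + 1) by omega]
    rw [Nat.factorial_succ (l + (s + e + 1) + 1), Nat.factorial_succ l,
      Nat.factorial_succ s, Nat.factorial_succ e, Nat.factorial_succ (s + e + 1)]
    rw [neg_pow t (s+1), show l + (s + 1) + 1 = (l + 1) + (s + 1) by omega,
      pow_add t (l+1) (s+1), show l + 1 + s + 1 = (l + 1) + (s + 1) by omega,
      pow_add t (l+1) (s+1)]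
    have f1 : ((l ! : ℝ)) ≠ 0 := by positivity
    have f2 : ((s ! : ℝ)) ≠ 0 := by positivity
    have f3 : ((e ! : ℝ)) ≠ 0 := by positivity
    have f4 : (((s+e+1)! : ℝ)) ≠ 0 := by positivity
    have f5 : (((l + (s+e+1) + 1)! : ℝ)) ≠ 0 := by positivity
    push_cast
    have g1 : ((l:ℝ) + 1 + s + 1) ≠ 0 := by positivity
    have g2 : ((l:ℝ) + (s + 1) + 1) ≠ 0 := by positivity
    field_simp
    ring
  have hS := Finset.sum_congr rfl hmid
  have hS2 := Finset.sum_add_distrib (s := range m)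
    (f := fun s => (-1:ℝ) ^ (s + 1 + 1) * (((l + m + 1)! : ℝ) /
          ((l ! : ℝ) * ((l:ℝ) + ((s + 1 : ℕ):ℝ) + 1) * ((s + 1)! : ℝ) * ((m - (s + 1))! : ℝ))) *
          t ^ (l + (s + 1) + 1))
    (g := fun s => d * t ^ (l + 1) * ((-t) ^ (s + 1) * (((m + 1).choose (s + 1) : ℕ) : ℝ)))
  have h0 : (-1:ℝ) ^ (0 + 1) * (((l + m + 1)! : ℝ) /
        ((l ! : ℝ) * ((l:ℝ) + ((0:ℕ):ℝ) + 1) * ((0:ℕ)! : ℝ) * ((m - 0)! : ℝ))) * t ^ (l + 0 + 1)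
      + d * t ^ (l + 1) * ((-t) ^ 0 * (((m + 1).choose 0 : ℕ) : ℝ)) = 0 := by
    rw [hd, Nat.cast_choose ℝ (show l + 1 ≤ m + 1 + l by omega),
      show m + 1 + l - (l + 1) = m by omega, Nat.choose_zero_right,
      show m - 0 = m by omega, Nat.factorial_succ l,
      show m + 1 + l = l + m + 1 by omega]
    have f1 : ((l ! : ℝ)) ≠ 0 := by positivity
    have f4 : ((m ! : ℝ)) ≠ 0 := by positivity
    push_cast
    have g1 : ((l:ℝ) + 0 + 1) ≠ 0 := by positivity
    field_simp
    ring
  have hend : (-1:ℝ) ^ (m + 1) * (((l + 1 + m + 1)! : ℝ) /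
        (((l + 1)! : ℝ) * (((l + 1 : ℕ):ℝ) + m + 1) * (m ! : ℝ) * ((m - m)! : ℝ))) *
        t ^ (l + 1 + m + 1)
      = d * t ^ (l + 1) * ((-t) ^ (m + 1) * (((m + 1).choose (m + 1) : ℕ) : ℝ)) := by
    rw [hd, Nat.cast_choose ℝ (show l + 1 ≤ m + 1 + l by omega),
      show m + 1 + l - (l + 1) = m by omega, Nat.choose_self,
      show m - m = 0 by omega, Nat.factorial_zero,
      show l + 1 + m + 1 = (l + m + 1) + 1 by omega, Nat.factorial_succ (l + m + 1),
      Nat.factorial_succ l, show m + 1 + l = l + m + 1 by omega,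
      neg_pow t (m+1)]
    have f1 : ((l ! : ℝ)) ≠ 0 := by positivity
    have f4 : ((m ! : ℝ)) ≠ 0 := by positivity
    push_cast
    have g1 : ((l:ℝ) + 1 + m + 1) ≠ 0 := by positivity
    field_simp
    ring
  linear_combination hS + hS2 + hend - h0

lemma Ebase (m : ℕ) (t : ℝ) : Efun 0 m t = (1-t)^(m+1) := by
  have hbin : (1-t)^(m+1) = ∑ a ∈ range (m+2), (-t)^a * (((m+1).choose a : ℕ) : ℝ) := by
    have h := add_pow (-t) (1:ℝ) (m+1)
    rw [show -t + 1 = 1 - t by ring] at h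
    rw [h]
    apply Finset.sum_congr rfl
    intro a _
    rw [one_pow]
    ring
  rw [Efun]
  have hmid : ∀ s ∈ range (m+1),
      (-1:ℝ)^(s+1) * (((0+m+1)! : ℝ) /
        (((0:ℕ)! : ℝ) * (((0:ℕ):ℝ)+s+1) * (s ! : ℝ) * ((m-s)! : ℝ))) * t^(0+s+1)
      = (-t)^(s+1) * (((m+1).choose (s+1) : ℕ) : ℝ) := by
    intro s hs
    simp only [mem_range] at hs
    rw [Nat.cast_choose ℝ (show s+1 ≤ m+1 by omega),
      show m + 1 - (s+1) = m - s by omega, Nat.factorial_succ s, neg_pow t (s+1),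
      Nat.factorial_zero, show (0+m+1) = m+1 by omega, Nat.factorial_succ m]
    have f2 : ((s ! : ℝ)) ≠ 0 := by positivity
    have f3 : (((m-s)! : ℝ)) ≠ 0 := by positivity
    have f4 : ((m ! : ℝ)) ≠ 0 := by positivity
    push_cast
    field_simp
    ring
  rw [Finset.sum_congr rfl hmid, hbin,
    Finset.sum_range_succ' (fun a => (-t)^a * (((m+1).choose a : ℕ) : ℝ)) (m+1)]
  rw [Nat.choose_zero_right]
  push_cast
  ring
lemma Estar (m : ℕ) (t : ℝ) :
    ∀ l, Efun l m t = (1-t)^(m+1) * ∑ j ∈ range (l+1), (((m+j).choose m : ℕ) : ℝ) * t^j := by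
  intro l
  induction l with
  | zero =>
    rw [Ebase]
    simp
  | succ l ih =>
    rw [Estep, ih,
      Finset.sum_range_succ (fun j => (((m+j).choose m : ℕ) : ℝ) * t^j) (l+1)]
    have hc : (((m+(l+1)).choose m : ℕ) : ℝ) = (((m+1+l).choose (l+1) : ℕ) : ℝ) := by
      congr 1
      rw [show m+1+l = m+(l+1) by omega]
      rw [← Nat.choose_symm (show l+1 ≤ m+(l+1) by omega)]
      congr 1
      omega
    rw [hc]
    ring


end GBhelpers

open Finset Nat in
/-- Explicit Gelfond-Bernstein basis for the complete Muntz space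
span(1, t^(l+1), ..., t^(l+n)) on [0,1]. -/
theorem stmt19 (l n : ℕ) (hn : 1 ≤ n) (t : ℝ) (ht : t ∈ Set.Icc (0:ℝ) 1) :
    GB n (fun i => if (i : ℕ) = 0 then 0 else (l : ℝ) + (i : ℕ)) 0 t
        = (1 - t) ^ n * ∑ j ∈ Finset.range (l+1), (((n + j - 1).choose (n-1)) : ℝ) * t ^ j
    ∧ ∀ k : Fin (n+1), 1 ≤ (k : ℕ) →
        GB n (fun i => if (i : ℕ) = 0 then 0 else (l : ℝ) + (i : ℕ)) k t
          = (((n + l).choose ((k : ℕ) + l)) : ℝ) * t ^ (l + (k : ℕ)) * (1 - t) ^ (n - (k : ℕ)) := by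
  obtain ⟨m, rfl⟩ : ∃ m, n = m + 1 := ⟨n - 1, by omega⟩
  constructor
  · rw [GB_zero, Estar]
    congr 1
    apply Finset.sum_congr rfl
    intro j _
    congr 2
    rw [show m + 1 + j - 1 = m + j by omega, show m + 1 - 1 = m by omega]
  · intro k hk
    exact GB_pos l (m+1) k hk t
end
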